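/- The measures g3 and g5 are independent of each other for strongly possible multivalued dependencies: there exist an incomplete table T1 with attribute sets X1, Y1 such that g3(X1 ↠_sp Y1) > g5(X1 ↠_sp Y1), and an incomplete table T2 with attribute sets X2, Y2 such that g3(X2 ↠_sp Y2) < g5(X2 ↠_sp Y2). -/
import Mathlib


/- Common framework: incomplete tables, strongly possible worlds and constraints.
   A tuple assigns each attribute a value in `Option V`, with `none` encoding the
   null marker ⊥.  In the degenerate case of an attribute whose active domain is
   empty, the fresh symbol `s` (outside all domains) is encoded by `none` in the
   strongly possible world: it is a single fixed symbol, equal only to itself and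
   different from every domain value, exactly as `none` behaves. -/

namespace SPDB

variable {α V : Type} [DecidableEq α] [DecidableEq V]

/-- A tuple over attribute type `α` with values in `V`; `none` is the null ⊥. -/
abbrev Tuple (α V : Type) := α → Option V

/-- An incomplete table: a finite multiset of tuples. -/
abbrev Table (α V : Type) := Multiset (Tuple α V)

/-- The active domain of attribute `A` in table `T`: the non-null values in column `A`. -/
def VD (T : Table α V) (A : α) : Finset V :=
  (T.filterMap fun t => t A).toFinset

/-- `t'` is a strongly possible extension of `t` w.r.t. the active domains of `T`:
non-null entries are kept, each null is replaced by an active domain value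
(by the fresh symbol, encoded `none`, if the active domain is empty). -/
def spExt (T : Table α V) (t t' : Tuple α V) : Prop :=
  ∀ A, (t A ≠ none → t' A = t A) ∧
       (t A = none → if (VD T A).Nonempty then ∃ v ∈ VD T A, t' A = some v
                     else t' A = none)

/-- `T'` is a strongly possible world of `T`. -/
def spWorld (T T' : Table α V) : Prop := Multiset.Rel (spExt T) T T'

/-- Two tuples agree on the attribute set `X`. -/
def agrees (X : Finset α) (t1 t2 : Tuple α V) : Prop := ∀ A ∈ X, t1 A = t2 A

/-- Weak similarity on the attribute set `X`. -/
def weakSim (X : Finset α) (t1 t2 : Tuple α V) : Prop :=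
  ∀ A ∈ X, t1 A = t2 A ∨ t1 A = none ∨ t2 A = none

/-- `t` is `X`-total: no nulls among the attributes of `X`. -/
def isTotal (X : Finset α) (t : Tuple α V) : Prop := ∀ A ∈ X, t A ≠ none

instance (X : Finset α) : DecidablePred (isTotal (V := V) X) := fun t =>
  decidable_of_iff (∀ A ∈ X, t A ≠ none) Iff.rfl

/-- Projection of a tuple to the attribute set `X` (nulls outside `X`). -/
def proj (X : Finset α) (t : Tuple α V) : Tuple α V :=
  fun A => if A ∈ X then t A else none

/-- A (complete) table satisfies the key `K`: tuple occurrences are pairwise distinct on `K`. -/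
def keyOn (K : Finset α) (T' : Table α V) : Prop := (T'.map (proj K)).Nodup

/-- A (complete) table satisfies the functional dependency `X → Y`. -/
def FD (X Y : Finset α) (T' : Table α V) : Prop :=
  ∀ t1 ∈ T', ∀ t2 ∈ T', agrees X t1 t2 → agrees Y t1 t2

/-- A (complete) table over schema `R` satisfies the multivalued dependency `X ↠ Y`. -/
def MVD (R X Y : Finset α) (T' : Table α V) : Prop :=
  ∀ t1 ∈ T', ∀ t2 ∈ T', agrees X t1 t2 →
    ∃ t ∈ T', agrees (X ∪ Y) t t1 ∧ agrees (X ∪ (R \ Y)) t t2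

/-- A (complete) table satisfies the cross join `X × Y`. -/
def CJ (X Y : Finset α) (T' : Table α V) : Prop :=
  ∀ t1 ∈ T', ∀ t2 ∈ T', ∃ t ∈ T', agrees X t t1 ∧ agrees Y t t2

/-- `K` is a strongly possible key of `T`: `sp⟨K⟩`. -/
def spKey (T : Table α V) (K : Finset α) : Prop :=
  ∃ T', spWorld T T' ∧ keyOn K T'

/-- The strongly possible functional dependency `X →_sp Y` holds in `T`. -/
def spFD (T : Table α V) (X Y : Finset α) : Prop :=
  ∃ T', spWorld T T' ∧ FD X Y T'

/-- The strongly possible multivalued dependency `X ↠_sp Y` holds in `T` over schema `R`. -/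
def spMVD (R : Finset α) (T : Table α V) (X Y : Finset α) : Prop :=
  ∃ T', spWorld T T' ∧ MVD R X Y T'

/-- The strongly possible cross join `X ×_sp Y` holds in `T`. -/
def spCJ (T : Table α V) (X Y : Finset α) : Prop :=
  ∃ T', spWorld T T' ∧ CJ X Y T'

/-- Lien's null multivalued dependency `X ↠ Y` over schema `R`. -/
def NMVD (R : Finset α) (T : Table α V) (X Y : Finset α) : Prop :=
  ∀ t1 ∈ T, ∀ t2 ∈ T, isTotal X t1 → isTotal X t2 → agrees X t1 t2 →
    ∃ t ∈ T, agrees (X ∪ Y) t t1 ∧ agrees (X ∪ (R \ Y)) t t2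

/-- The minimum number of tuples whose removal from `T` makes `P` hold
(`T = T₀ + S` means that `S` is a submultiset of `T` and `T₀ = T ∖ S`). -/
noncomputable def g3Card (T : Table α V) (P : Table α V → Prop) : ℕ :=
  sInf {n : ℕ | ∃ T₀ S : Table α V, T = T₀ + S ∧ P T₀ ∧ Multiset.card S = n}

/-- `g3`: the minimum, over submultisets `S` of `T` whose removal makes the
constraint `P` hold, of `|S|/|T|`. -/
noncomputable def g3 (T : Table α V) (P : Table α V → Prop) : ℚ :=
  (g3Card T P : ℚ) / (Multiset.card T : ℚ)

/-- The minimum number of tuples whose addition to `T` makes `P` hold. -/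
noncomputable def g5Card (T : Table α V) (P : Table α V → Prop) : ℕ :=
  sInf {n : ℕ | ∃ S : Table α V, P (T + S) ∧ Multiset.card S = n}

/-- `g5`: the minimum, over finite multisets `S` of tuples whose addition makes
the constraint `P` hold, of `|S|/|T|`. -/
noncomputable def g5 (T : Table α V) (P : Table α V → Prop) : ℚ :=
  (g5Card T P : ℚ) / (Multiset.card T : ℚ)

end SPDB

namespace SPDB

def tp (a b : ℕ) : Tuple ℕ ℕ := fun n => if n = 0 then some a else if n = 1 then some b else none
def tpn (a : ℕ) : Tuple ℕ ℕ := fun n => if n = 0 then some a else none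

@[simp] lemma tp_zero (a b : ℕ) : tp a b 0 = some a := rfl
@[simp] lemma tp_one (a b : ℕ) : tp a b 1 = some b := rfl
@[simp] lemma tpn_zero (a : ℕ) : tpn a 0 = some a := rfl
@[simp] lemma tpn_one (a : ℕ) : tpn a 1 = none := rfl

lemma tp_high {A : ℕ} (a b : ℕ) (h0 : A ≠ 0) (h1 : A ≠ 1) : tp a b A = none := by
  simp [tp, h0, h1]
lemma tpn_high {A : ℕ} (a : ℕ) (h0 : A ≠ 0) : tpn a A = none := by
  simp [tpn, h0]

lemma tp_inj {a b c d : ℕ} (h : tp a b = tp c d) : a = c ∧ b = d :=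
  ⟨by simpa [tp] using congrFun h 0, by simpa [tp] using congrFun h 1⟩

lemma tp_ne_tpn (a b c : ℕ) : tp a b ≠ tpn c := fun h => by
  simpa [tp, tpn] using congrFun h 1

lemma rel_right {β γ : Type} {r : β → γ → Prop} {s : Multiset β} {t : Multiset γ}
    (h : Multiset.Rel r s t) : ∀ a ∈ s, ∃ b ∈ t, r a b := by
  induction h with
  | zero => simp
  | @cons a b s t hr _ ih =>
    intro x hx
    rcases Multiset.mem_cons.mp hx with rfl | hx
    · exact ⟨b, Multiset.mem_cons_self _ _, hr⟩
    · obtain ⟨y, hy, hxy⟩ := ih x hx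
      exact ⟨y, Multiset.mem_cons_of_mem hy, hxy⟩

lemma rel_left {β γ : Type} {r : β → γ → Prop} {s : Multiset β} {t : Multiset γ}
    (h : Multiset.Rel r s t) : ∀ b ∈ t, ∃ a ∈ s, r a b := by
  induction h with
  | zero => simp
  | @cons a b s t hr _ ih =>
    intro x hx
    rcases Multiset.mem_cons.mp hx with rfl | hx
    · exact ⟨a, Multiset.mem_cons_self _ _, hr⟩
    · obtain ⟨y, hy, hxy⟩ := ih x hx
      exact ⟨y, Multiset.mem_cons_of_mem hy, hxy⟩

lemma spExt_self {T : Table ℕ ℕ} {t : Tuple ℕ ℕ}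
    (h : ∀ A, t A = none → ¬ (VD T A).Nonempty) : spExt T t t :=
  fun A => ⟨fun _ => rfl, fun h0 => by rw [if_neg (h A h0)]; exact h0⟩

lemma VD_high {T : Table ℕ ℕ} (h : ∀ t ∈ T, ∀ A, A ≠ 0 → A ≠ 1 → t A = none)
    {A : ℕ} (h0 : A ≠ 0) (h1 : A ≠ 1) : ¬ (VD T A).Nonempty := by
  rintro ⟨v, hv⟩
  rw [VD, Multiset.mem_toFinset, Multiset.mem_filterMap] at hv
  obtain ⟨t, ht, hv⟩ := hv
  rw [h t ht A h0 h1] at hv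
  cases hv

lemma spExt_tp {T : Table ℕ ℕ} (h : ∀ t ∈ T, ∀ A, A ≠ 0 → A ≠ 1 → t A = none)
    (a b : ℕ) : spExt T (tp a b) (tp a b) := by
  apply spExt_self
  intro A hA
  by_cases h0 : A = 0
  · subst h0; simp at hA
  · by_cases h1 : A = 1
    · subst h1; simp at hA
    · exact VD_high h h0 h1

lemma spWorld_tps {T M : Table ℕ ℕ} (h : ∀ t ∈ T, ∀ A, A ≠ 0 → A ≠ 1 → t A = none)
    (hM : ∀ t ∈ M, ∃ a b, t = tp a b) : Multiset.Rel (spExt T) M M := by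
  induction M using Multiset.induction with
  | empty => exact Multiset.Rel.zero
  | cons a s ih =>
    obtain ⟨x, y, rfl⟩ := hM a (Multiset.mem_cons_self _ _)
    exact Multiset.Rel.cons (spExt_tp h x y)
      (ih fun t ht => hM t (Multiset.mem_cons_of_mem ht))

lemma rectMVD {G : Finset ℕ} {W : Table ℕ ℕ}
    (h1 : ∀ t ∈ W, ∃ a ∈ G, ∃ b ∈ G, t = tp a b)
    (h2 : ∀ a ∈ G, ∀ b ∈ G, tp a b ∈ W) :
    MVD {0, 1} ∅ {0} W := by
  intro t1 ht1 t2 ht2 _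
  obtain ⟨a, ha, b, hb, rfl⟩ := h1 t1 ht1
  obtain ⟨c, hc, d, hd, rfl⟩ := h1 t2 ht2
  refine ⟨tp a d, h2 a ha d hd, ?_, ?_⟩
  · intro A hA
    have hA0 : A = 0 := by simpa using hA
    subst hA0; rfl
  · intro A hA
    have hA1 : A = 1 := by
      simp [Finset.mem_sdiff] at hA
      omega
    subst hA1; rfl


def TA : Table ℕ ℕ := {tp 1 1, tp 1 1, tp 2 2, tp 2 2, tpn 1}
def TB : Table ℕ ℕ := {tp 1 1, tp 1 2, tp 2 1, tp 2 2, tp 3 3}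

lemma notA {T0 : Table ℕ ℕ} (h1 : tp 1 1 ∈ T0) (h2 : tp 2 2 ∈ T0)
    (hall : ∀ u ∈ T0, u = tp 2 2 ∨ u 0 = some 1) :
    ¬ spMVD {0, 1} T0 ∅ {0} := by
  rintro ⟨T', hw, hm⟩
  obtain ⟨w2, hw2, he2⟩ := rel_right hw _ h2
  obtain ⟨w1, hw1, he1⟩ := rel_right hw _ h1
  have e20 : w2 0 = some 2 := (he2 0).1 (by simp)
  have e11 : w1 1 = some 1 := (he1 1).1 (by simp)
  obtain ⟨t, ht, hY, hZ⟩ := hm w2 hw2 w1 hw1 (fun A hA => by simp at hA)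
  have t0 : t 0 = some 2 := (hY 0 (by simp)).trans e20
  have t1 : t 1 = some 1 := (hZ 1 (by decide)).trans e11
  obtain ⟨u, hu, heu⟩ := rel_left hw _ ht
  rcases hall u hu with rfl | h0
  · have h' : t 1 = some 2 := (heu 1).1 (by simp)
    rw [t1] at h'; simp at h'
  · have hne : u 0 ≠ none := by rw [h0]; simp
    have h' : t 0 = u 0 := (heu 0).1 hne
    rw [t0, h0] at h'; simp at h'

lemma notB (S : Table ℕ ℕ) (hS : Multiset.card S ≤ 1) :
    ¬ spMVD {0, 1} (TB + S) ∅ {0} := by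
  rintro ⟨T', hw, hm⟩
  have hcard : Multiset.card T' = 5 + Multiset.card S := by
    rw [← Multiset.card_eq_card_of_rel hw]
    simp [TB]; omega
  have key : ∀ i : ℕ, tp i i ∈ TB + S → ∃ w ∈ T', w 0 = some i ∧ w 1 = some i := by
    intro i hi
    obtain ⟨w, hwmem, he⟩ := rel_right hw _ hi
    exact ⟨w, hwmem, (he 0).1 (by simp), (he 1).1 (by simp)⟩
  obtain ⟨w1, hw1, e1⟩ := key 1 (by simp [TB])
  obtain ⟨w2, hw2, e2⟩ := key 2 (by simp [TB])
  obtain ⟨w3, hw3, e3⟩ := key 3 (by simp [TB])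
  have pair : ∀ w ∈ T', ∀ w' ∈ T', ∃ t ∈ T', t 0 = w 0 ∧ t 1 = w' 1 := by
    intro w hwm w' hwm'
    obtain ⟨t, ht, hY, hZ⟩ := hm w hwm w' hwm' (fun A hA => by simp at hA)
    exact ⟨t, ht, hY 0 (by simp), hZ 1 (by decide)⟩
  classical
  have hsub : (({some 1, some 2, some 3} : Finset (Option ℕ)) ×ˢ
      ({some 1, some 2, some 3} : Finset (Option ℕ))) ⊆
      (T'.map fun t => (t 0, t 1)).toFinset := by
    intro p hp
    rw [Finset.mem_product] at hp
    have hx : ∃ w ∈ T', w 0 = p.1 := by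
      rcases Finset.mem_insert.mp hp.1 with h | h
      · exact ⟨w1, hw1, by rw [e1.1, h]⟩
      · rcases Finset.mem_insert.mp h with h | h
        · exact ⟨w2, hw2, by rw [e2.1, h]⟩
        · exact ⟨w3, hw3, by rw [e3.1, Finset.mem_singleton.mp h]⟩
    have hy : ∃ w ∈ T', w 1 = p.2 := by
      rcases Finset.mem_insert.mp hp.2 with h | h
      · exact ⟨w1, hw1, by rw [e1.2, h]⟩
      · rcases Finset.mem_insert.mp h with h | h
        · exact ⟨w2, hw2, by rw [e2.2, h]⟩
        · exact ⟨w3, hw3, by rw [e3.2, Finset.mem_singleton.mp h]⟩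
    obtain ⟨wa, hwa, ea⟩ := hx
    obtain ⟨wb, hwb, eb⟩ := hy
    obtain ⟨t, ht, et0, et1⟩ := pair wa hwa wb hwb
    rw [Multiset.mem_toFinset, Multiset.mem_map]
    exact ⟨t, ht, by simp [et0, et1, ea, eb]⟩
  have h9 : 9 ≤ (T'.map fun t => (t 0, t 1)).toFinset.card := by
    have hc := Finset.card_le_card hsub
    have : (({some 1, some 2, some 3} : Finset (Option ℕ)) ×ˢ
        ({some 1, some 2, some 3} : Finset (Option ℕ))).card = 9 := by rfl
    rw [this] at hc
    exact hc
  have hle : (T'.map fun t => (t 0, t 1)).toFinset.card ≤ Multiset.card T' := by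
    have := Multiset.toFinset_card_le (T'.map fun t => (t 0, t 1))
    simpa using this
  have : Multiset.card S ≤ 1 := hS
  linarith

lemma TAS_high : ∀ t ∈ TA + ({tp 2 1} : Table ℕ ℕ), ∀ A, A ≠ 0 → A ≠ 1 → t A = none := by
  intro t ht A h0 h1
  simp [TA] at ht
  rcases ht with rfl | rfl | rfl | rfl | rfl | rfl
  all_goals first | exact tp_high _ _ h0 h1 | exact tpn_high _ h0

lemma two_mem_VD : (2 : ℕ) ∈ VD (TA + ({tp 2 1} : Table ℕ ℕ)) 1 := by
  rw [VD, Multiset.mem_toFinset, Multiset.mem_filterMap]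
  exact ⟨tp 2 2, by simp [TA], rfl⟩

lemma spA : spMVD {0, 1} (TA + ({tp 2 1} : Table ℕ ℕ)) ∅ {0} := by
  refine ⟨tp 1 1 ::ₘ tp 1 1 ::ₘ tp 2 2 ::ₘ tp 2 2 ::ₘ tp 1 2 ::ₘ {tp 2 1}, ?_, ?_⟩
  · have hU : TA + ({tp 2 1} : Table ℕ ℕ)
        = tp 1 1 ::ₘ tp 1 1 ::ₘ tp 2 2 ::ₘ tp 2 2 ::ₘ tpn 1 ::ₘ {tp 2 1} := rfl
    have hext : spExt (TA + ({tp 2 1} : Table ℕ ℕ)) (tpn 1) (tp 1 2) := by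
      intro A
      constructor
      · intro hA
        by_cases h0 : A = 0
        · subst h0; rfl
        · exact absurd (tpn_high 1 h0) hA
      · intro hA
        by_cases h1 : A = 1
        · subst h1
          rw [if_pos ⟨2, two_mem_VD⟩]
          exact ⟨2, two_mem_VD, rfl⟩
        · by_cases h0 : A = 0
          · subst h0; simp at hA
          · rw [if_neg (VD_high TAS_high h0 h1)]
            exact tp_high 1 2 h0 h1
    show Multiset.Rel _ _ _
    rw [hU]
    exact Multiset.Rel.cons (spExt_tp TAS_high 1 1)
      (Multiset.Rel.cons (spExt_tp TAS_high 1 1)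
        (Multiset.Rel.cons (spExt_tp TAS_high 2 2)
          (Multiset.Rel.cons (spExt_tp TAS_high 2 2)
            (Multiset.Rel.cons hext
              (Multiset.Rel.cons (spExt_tp TAS_high 2 1) Multiset.Rel.zero)))))
  · apply rectMVD (G := {1, 2})
    · intro t ht
      simp at ht
      rcases ht with rfl | rfl | rfl | rfl
      · exact ⟨1, by simp, 1, by simp, rfl⟩
      · exact ⟨2, by simp, 2, by simp, rfl⟩
      · exact ⟨1, by simp, 2, by simp, rfl⟩
      · exact ⟨2, by simp, 1, by simp, rfl⟩
    · intro a ha b hb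
      simp at ha hb
      rcases ha with rfl | rfl <;> rcases hb with rfl | rfl <;> simp

lemma spB0 : spMVD {0, 1} ({tp 1 1, tp 1 2, tp 2 1, tp 2 2} : Table ℕ ℕ) ∅ {0} := by
  refine ⟨_, spWorld_tps ?_ ?_, rectMVD (G := {1, 2}) ?_ ?_⟩
  · intro t ht A h0 h1
    simp at ht
    rcases ht with rfl | rfl | rfl | rfl <;> exact tp_high _ _ h0 h1
  · intro t ht
    simp at ht
    rcases ht with rfl | rfl | rfl | rfl
    exacts [⟨1, 1, rfl⟩, ⟨1, 2, rfl⟩, ⟨2, 1, rfl⟩, ⟨2, 2, rfl⟩]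
  · intro t ht
    simp at ht
    rcases ht with rfl | rfl | rfl | rfl
    · exact ⟨1, by simp, 1, by simp, rfl⟩
    · exact ⟨1, by simp, 2, by simp, rfl⟩
    · exact ⟨2, by simp, 1, by simp, rfl⟩
    · exact ⟨2, by simp, 2, by simp, rfl⟩
  · intro a ha b hb
    simp at ha hb
    rcases ha with rfl | rfl <;> rcases hb with rfl | rfl <;> simp

lemma spB9 : spMVD {0, 1} (TB + ({tp 1 3, tp 2 3, tp 3 1, tp 3 2} : Table ℕ ℕ)) ∅ {0} := by
  refine ⟨_, spWorld_tps ?_ ?_, rectMVD (G := {1, 2, 3}) ?_ ?_⟩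
  · intro t ht A h0 h1
    simp [TB] at ht
    rcases ht with rfl|rfl|rfl|rfl|rfl|rfl|rfl|rfl|rfl <;> exact tp_high _ _ h0 h1
  · intro t ht
    simp [TB] at ht
    rcases ht with rfl|rfl|rfl|rfl|rfl|rfl|rfl|rfl|rfl <;>
      first
      | exact ⟨1,1,rfl⟩ | exact ⟨1,2,rfl⟩ | exact ⟨2,1,rfl⟩ | exact ⟨2,2,rfl⟩
      | exact ⟨3,3,rfl⟩ | exact ⟨1,3,rfl⟩ | exact ⟨2,3,rfl⟩ | exact ⟨3,1,rfl⟩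
      | exact ⟨3,2,rfl⟩
  · intro t ht
    simp [TB] at ht
    rcases ht with rfl|rfl|rfl|rfl|rfl|rfl|rfl|rfl|rfl <;>
      first
      | exact ⟨1, by simp, 1, by simp, rfl⟩ | exact ⟨1, by simp, 2, by simp, rfl⟩
      | exact ⟨2, by simp, 1, by simp, rfl⟩ | exact ⟨2, by simp, 2, by simp, rfl⟩
      | exact ⟨3, by simp, 3, by simp, rfl⟩ | exact ⟨1, by simp, 3, by simp, rfl⟩
      | exact ⟨2, by simp, 3, by simp, rfl⟩ | exact ⟨3, by simp, 1, by simp, rfl⟩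
      | exact ⟨3, by simp, 2, by simp, rfl⟩
  · intro a ha b hb
    simp at ha hb
    rcases ha with rfl | rfl | rfl <;> rcases hb with rfl | rfl | rfl <;> simp [TB]

lemma spMVD_zero : spMVD {0, 1} (0 : Table ℕ ℕ) ∅ {0} :=
  ⟨0, Multiset.Rel.zero, fun t1 ht1 => absurd ht1 (by simp)⟩

lemma mem_T0_of {T0 S : Table ℕ ℕ} (heq : TA = T0 + S) (hS : Multiset.card S ≤ 1) :
    tp 1 1 ∈ T0 ∧ tp 2 2 ∈ T0 := by
  classical
  have hne1 : (tp 1 1 : Tuple ℕ ℕ) ≠ tp 2 2 := fun h => by simpa using (tp_inj h).1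
  have hne2 : (tp 1 1 : Tuple ℕ ℕ) ≠ tpn 1 := tp_ne_tpn 1 1 1
  have hne3 : (tp 2 2 : Tuple ℕ ℕ) ≠ tp 1 1 := fun h => hne1 h.symm
  have hne4 : (tp 2 2 : Tuple ℕ ℕ) ≠ tpn 1 := tp_ne_tpn 2 2 1
  have c1 : Multiset.count (tp 1 1) TA = 2 := by
    simp [TA, Multiset.count_cons, Multiset.count_singleton, hne1, hne2]
  have c2 : Multiset.count (tp 2 2) TA = 2 := by
    simp [TA, Multiset.count_cons, Multiset.count_singleton, hne3, hne4]
  have h1 := congrArg (Multiset.count (tp 1 1)) heq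
  have h2 := congrArg (Multiset.count (tp 2 2)) heq
  rw [Multiset.count_add] at h1 h2
  have b1 := Multiset.count_le_card (tp 1 1) S
  have b2 := Multiset.count_le_card (tp 2 2) S
  constructor <;> rw [← Multiset.count_pos] <;> omega

end SPDB



open SPDB in
/-- `g3` and `g5` are independent for spMVDs: there are a table with
`g3(X ↠_sp Y) > g5(X ↠_sp Y)` and a table with `g3(X ↠_sp Y) < g5(X ↠_sp Y)`. -/
theorem statement15 :
    (∃ (R1 X1 Y1 : Finset ℕ) (T1 : Table ℕ ℕ), X1 ⊆ R1 ∧ Y1 ⊆ R1 ∧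
      g5 T1 (fun U => spMVD R1 U X1 Y1) < g3 T1 (fun U => spMVD R1 U X1 Y1)) ∧
    (∃ (R2 X2 Y2 : Finset ℕ) (T2 : Table ℕ ℕ), X2 ⊆ R2 ∧ Y2 ⊆ R2 ∧
      g3 T2 (fun U => spMVD R2 U X2 Y2) < g5 T2 (fun U => spMVD R2 U X2 Y2)) := by
  constructor
  · refine ⟨{0, 1}, ∅, {0}, TA, Finset.empty_subset _, by decide, ?_⟩
    have hg5 : g5Card TA (fun U => spMVD {0, 1} U ∅ {0}) ≤ 1 :=
      Nat.sInf_le ⟨{tp 2 1}, spA, rfl⟩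
    have hg3 : 2 ≤ g3Card TA (fun U => spMVD {0, 1} U ∅ {0}) := by
      apply le_csInf
      · exact ⟨5, 0, TA, (zero_add TA).symm, spMVD_zero, rfl⟩
      · rintro n ⟨T0, S, heq, hP, rfl⟩
        by_contra hlt
        push_neg at hlt
        have hS : Multiset.card S ≤ 1 := by omega
        obtain ⟨m1, m2⟩ := mem_T0_of heq hS
        refine notA m1 m2 ?_ hP
        intro u hu
        have hu' : u ∈ TA := Multiset.mem_of_le
          (Multiset.le_iff_exists_add.mpr ⟨S, heq⟩) hu
        simp [TA] at hu'
        rcases hu' with rfl | rfl | rfl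
        · right; rfl
        · left; rfl
        · right; rfl
    have hcard : (Multiset.card TA : ℚ) = 5 := by rfl
    simp only [g3, g5, hcard]
    have h1 : ((g5Card TA fun U => spMVD {0, 1} U ∅ {0} : ℕ) : ℚ) ≤ 1 := by
      exact_mod_cast hg5
    have h2 : (2 : ℚ) ≤ ((g3Card TA fun U => spMVD {0, 1} U ∅ {0} : ℕ) : ℚ) := by
      exact_mod_cast hg3
    linarith
  · refine ⟨{0, 1}, ∅, {0}, TB, Finset.empty_subset _, by decide, ?_⟩
    have hg3 : g3Card TB (fun U => spMVD {0, 1} U ∅ {0}) ≤ 1 :=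
      Nat.sInf_le ⟨{tp 1 1, tp 1 2, tp 2 1, tp 2 2}, {tp 3 3}, rfl, spB0, rfl⟩
    have hg5 : 2 ≤ g5Card TB (fun U => spMVD {0, 1} U ∅ {0}) := by
      apply le_csInf
      · exact ⟨4, {tp 1 3, tp 2 3, tp 3 1, tp 3 2}, spB9, rfl⟩
      · rintro n ⟨S, hP, rfl⟩
        by_contra hlt
        push_neg at hlt
        exact notB S (by omega) hP
    have hcard : (Multiset.card TB : ℚ) = 5 := by rfl
    simp only [g3, g5, hcard]
    have h1 : ((g3Card TB fun U => spMVD {0, 1} U ∅ {0} : ℕ) : ℚ) ≤ 1 := by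
      exact_mod_cast hg3
    have h2 : (2 : ℚ) ≤ ((g5Card TB fun U => spMVD {0, 1} U ∅ {0} : ℕ) : ℚ) := by
      exact_mod_cast hg5
    linarith
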